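/- arXiv:1909.06666 — 6 statements merged into one kernel-verified Lean document; each statement's English description precedes it below -/
import Mathlib

section
/- Let k be a field of characteristic p > 0, G a finite group, and P a p-subgroup of G. The Brauer homomorphism Br_P : (kG)^P → kC_G(P), sending ∑ α_g g to ∑_{g ∈ C_G(P)} α_g g, is a surjective k-algebra homomorphism from the P-fixed points of kG (under conjugation) to the group algebra of the centralizer of P. -/
open Finset MulAction

/-- Sum over a finite invariant set of non-fixed points of a p-group action vanishes in char p. -/
lemma sum_orbits_zero {p : ℕ} [Fact p.Prime] {k : Type*} [Field k] [CharP k p]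
    {Q X : Type*} [Group Q] [Finite Q]
    (hQ : IsPGroup p Q) (σ : Q →* Equiv.Perm X) (f : X → k)
    (hf : ∀ (g : Q) (x : X), f (σ g x) = f x) :
    ∀ t : Finset X, (∀ (g : Q) (x : X), x ∈ t → σ g x ∈ t) →
      (∀ x ∈ t, ∃ g : Q, σ g x ≠ x) → ∑ x ∈ t, f x = 0 := by
  classical
  letI : MulAction Q X := MulAction.compHom X σ
  have hsmul : ∀ (g : Q) (x : X), g • x = σ g x := fun _ _ => rfl
  intro t
  induction t using Finset.strongInduction with
  | _ t ih =>
    intro hcl hnf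
    rcases t.eq_empty_or_nonempty with rfl | ⟨x, hx⟩
    · simp
    · have horb : (MulAction.orbit Q x).Finite := Set.finite_range _
      haveI : Finite (MulAction.orbit Q x) := horb
      let o : Finset X := horb.toFinset
      have ho_mem : ∀ y, y ∈ o ↔ y ∈ MulAction.orbit Q x := fun y => horb.mem_toFinset
      have ho_sub : o ⊆ t := by
        intro y hy
        obtain ⟨g, rfl⟩ := (ho_mem y).1 hy
        exact hcl g x hx
      have hxo : x ∈ o := (ho_mem x).2 (MulAction.mem_orbit_self x)
      -- the orbit sum vanishes
      obtain ⟨n, hn⟩ := hQ.card_orbit x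
      obtain ⟨g, hg⟩ := hnf x hx
      have hnt : Nontrivial (MulAction.orbit Q x) :=
        ⟨⟨⟨σ g x, ⟨g, rfl⟩⟩, ⟨x, MulAction.mem_orbit_self x⟩, by
          simp only [ne_eq, Subtype.mk.injEq]; exact fun h => hg (congrArg Subtype.val h)⟩⟩
      have h1 : 1 < Nat.card (MulAction.orbit Q x) := Finite.one_lt_card_iff_nontrivial.2 hnt
      have hdvd : p ∣ o.card := by
        have hcard : o.card = Nat.card (MulAction.orbit Q x) := by
          rw [Nat.card_eq_card_finite_toFinset horb]
        rw [hcard, hn]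
        refine dvd_pow_self p ?_
        rintro rfl
        simp [hn] at h1
      have hsum_o : ∑ y ∈ o, f y = 0 := by
        have hconst : ∀ y ∈ o, f y = f x := by
          intro y hy
          obtain ⟨g, rfl⟩ := (ho_mem y).1 hy
          exact hf g x
        rw [Finset.sum_congr rfl hconst, Finset.sum_const, nsmul_eq_mul,
          (CharP.cast_eq_zero_iff k p o.card).2 hdvd, zero_mul]
      have hsplit : ∑ y ∈ t \ o, f y + ∑ y ∈ o, f y = ∑ y ∈ t, f y :=
        Finset.sum_sdiff ho_sub
      have hrec : ∑ y ∈ t \ o, f y = 0 := by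
        refine ih (t \ o) ?_ ?_ ?_
        · exact Finset.sdiff_ssubset ho_sub ⟨x, hxo⟩
        · intro g y hy
          rcases Finset.mem_sdiff.1 hy with ⟨hyt, hyo⟩
          refine Finset.mem_sdiff.2 ⟨hcl g y hyt, fun hmem => hyo ?_⟩
          obtain ⟨h, hh⟩ := (ho_mem _).1 hmem
          refine (ho_mem y).2 ⟨g⁻¹ * h, ?_⟩
          have : σ g y = σ h x := hh.symm
          calc σ (g⁻¹ * h) x = σ g⁻¹ (σ h x) := by rw [map_mul]; rfl
            _ = σ g⁻¹ (σ g y) := by rw [this]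
            _ = y := by rw [← Equiv.Perm.mul_apply, ← map_mul, inv_mul_cancel, map_one]; rfl
        · intro y hy
          exact hnf y (Finset.mem_sdiff.1 hy).1
      rw [← hsplit, hrec, hsum_o, add_zero]

/-- Conjugation by `x` on the group algebra `kG`, as a `k`-algebra automorphism. -/
noncomputable def conjAct (k : Type*) {G : Type*} [Field k] [Group G] (x : G) :
    MonoidAlgebra k G ≃ₐ[k] MonoidAlgebra k G :=
  MonoidAlgebra.domCongr k k (MulAut.conj x)

/-- The subalgebra `(kG)^P` of fixed points of `kG` under conjugation by elements of `P`. -/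
noncomputable def fixedSubalgebra (k : Type*) {G : Type*} [Field k] [Group G] (P : Subgroup G) :
    Subalgebra k (MonoidAlgebra k G) where
  carrier := {a | ∀ x ∈ P, conjAct k x a = a}
  mul_mem' := fun ha hb x hx => by rw [map_mul, ha x hx, hb x hx]
  add_mem' := fun ha hb x hx => by rw [map_add, ha x hx, hb x hx]
  algebraMap_mem' := fun r x _ => by simp [conjAct]

/-- The Brauer homomorphism as a function: restrict the coefficients to `C_G(P)`. -/
noncomputable def BrauerMap {k G : Type*} [Field k] [Group G] (P : Subgroup G)
    (a : MonoidAlgebra k G) : MonoidAlgebra k ↥(Subgroup.centralizer (P : Set G)) :=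
  MonoidAlgebra.ofCoeff (Finsupp.subtypeDomain (· ∈ Subgroup.centralizer (P : Set G)) a.coeff)

section Pieces
variable {k G : Type*} [Field k] [Group G] {P : Subgroup G}

/-- coefficient form of the fixed point condition -/
lemma fixed_coeff {a : MonoidAlgebra k G} (ha : a ∈ fixedSubalgebra k P)
    {x : G} (hx : x ∈ P) (g : G) : a.coeff (x * g * x⁻¹) = a.coeff g := by
  have h := ha x hx
  have h2 : (conjAct k x a).coeff (x * g * x⁻¹) = a.coeff g := by
    rw [conjAct, MonoidAlgebra.domCongr_apply]
    congr 1
    simp [mul_assoc]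
  rw [h] at h2
  exact h2

lemma conj_mem_centralizer {x y : G} (hx : x ∈ P)
    (hy : y ∈ Subgroup.centralizer (P : Set G)) :
    x * y * x⁻¹ ∈ Subgroup.centralizer (P : Set G) := by
  rw [Subgroup.mem_centralizer_iff] at hy ⊢
  intro z hz
  have h := hy (x⁻¹ * z * x) (by exact mul_mem (mul_mem (inv_mem hx) hz) hx)
  calc z * (x * y * x⁻¹) = x * ((x⁻¹ * z * x) * y) * x⁻¹ := by group
    _ = x * (y * (x⁻¹ * z * x)) * x⁻¹ := by rw [h]
    _ = x * y * x⁻¹ * z := by group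

lemma conj_mem_centralizer_iff {x y : G} (hx : x ∈ P) :
    x * y * x⁻¹ ∈ Subgroup.centralizer (P : Set G) ↔
      y ∈ Subgroup.centralizer (P : Set G) := by
  constructor
  · intro h
    have := conj_mem_centralizer (inv_mem hx) h
    simpa [mul_assoc] using this
  · exact conj_mem_centralizer hx

/-- conjugation of pairs as a homomorphism to permutations -/
def conjPerm (P : Subgroup G) : ↥P →* Equiv.Perm (G × G) where
  toFun x := Equiv.prodCongr (MulAut.conj (x : G)).toEquiv (MulAut.conj (x : G)).toEquiv
  map_one' := by ext q <;> simp
  map_mul' x y := by ext q <;> simp [mul_assoc]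

lemma conjPerm_apply (x : ↥P) (q : G × G) :
    conjPerm P x q = (↑x * q.1 * (↑x)⁻¹, ↑x * q.2 * (↑x)⁻¹) := rfl

end Pieces

section Mul
variable {p : ℕ} [Fact p.Prime] {k G : Type*} [Field k] [CharP k p] [Group G] [Fintype G]
  {P : Subgroup G}

lemma brauer_mul (hP : IsPGroup p P) {a b : MonoidAlgebra k G}
    (ha : a ∈ fixedSubalgebra k P) (hb : b ∈ fixedSubalgebra k P) :
    BrauerMap P (a * b) = BrauerMap P a * BrauerMap P b := by
  classical
  set C := Subgroup.centralizer (P : Set G) with hC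
  ext c
  obtain ⟨c, hc⟩ := c
  -- RHS as a sum over pairs in C × C
  have hRHS : (BrauerMap P a * BrauerMap P b).coeff ⟨c, hc⟩ =
      ∑ q ∈ Finset.univ.filter (fun q : ↥C × ↥C => (q.1 : G) * q.2 = c),
        a.coeff q.1 * b.coeff q.2 := by
    rw [MonoidAlgebra.mul_apply_antidiagonal (BrauerMap P a) (BrauerMap P b) ⟨c, hc⟩
      (Finset.univ.filter (fun q : ↥C × ↥C => (q.1 : G) * q.2 = c))
      (by intro q; simp [Subtype.ext_iff])]
    rfl
  -- LHS as a sum over pairs in G × G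
  have hLHS : (BrauerMap P (a * b)).coeff ⟨c, hc⟩ =
      ∑ q ∈ Finset.univ.filter (fun q : G × G => q.1 * q.2 = c), a.coeff q.1 * b.coeff q.2 := by
    rw [show (BrauerMap P (a * b)).coeff ⟨c, hc⟩ = (a * b).coeff c from rfl]
    exact MonoidAlgebra.mul_apply_antidiagonal a b c _ (by intro q; simp)
  rw [hLHS, hRHS]
  set s : Finset (G × G) := Finset.univ.filter (fun q : G × G => q.1 * q.2 = c) with hs
  have hsplit := Finset.sum_filter_add_sum_filter_not s
    (fun q : G × G => q.1 ∈ C ∧ q.2 ∈ C) (fun q => a.coeff q.1 * b.coeff q.2)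
  -- the non-fixed part vanishes
  have hzero : ∑ q ∈ s.filter (fun q => ¬(q.1 ∈ C ∧ q.2 ∈ C)), a.coeff q.1 * b.coeff q.2 = 0 := by
    refine sum_orbits_zero hP (conjPerm P) (fun q => a.coeff q.1 * b.coeff q.2) ?_ _ ?_ ?_
    · rintro ⟨g, hg⟩ q
      rw [conjPerm_apply]
      simp only
      rw [fixed_coeff ha hg, fixed_coeff hb hg]
    · rintro ⟨g, hg⟩ q hq
      simp only [Finset.mem_filter, hs, Finset.mem_univ, true_and] at hq ⊢
      rw [conjPerm_apply]
      have hcg : g * c * g⁻¹ = c := by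
        have h := (Subgroup.mem_centralizer_iff.1 hc) g hg
        rw [h]; group
      constructor
      · simp only
        calc g * q.1 * g⁻¹ * (g * q.2 * g⁻¹) = g * (q.1 * q.2) * g⁻¹ := by group
          _ = c := by rw [hq.1, hcg]
      · intro hmem
        exact hq.2 ⟨(conj_mem_centralizer_iff hg).1 hmem.1,
          (conj_mem_centralizer_iff hg).1 hmem.2⟩
    · intro q hq
      simp only [Finset.mem_filter, hs, Finset.mem_univ, true_and] at hq
      by_contra hfix
      push_neg at hfix
      refine hq.2 ⟨?_, ?_⟩
      · rw [Subgroup.mem_centralizer_iff]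
        intro z hz
        have h := congrArg Prod.fst (hfix ⟨z, hz⟩)
        rw [conjPerm_apply] at h
        simp only at h
        exact mul_inv_eq_iff_eq_mul.1 h
      · rw [Subgroup.mem_centralizer_iff]
        intro z hz
        have h := congrArg Prod.snd (hfix ⟨z, hz⟩)
        rw [conjPerm_apply] at h
        simp only at h
        exact mul_inv_eq_iff_eq_mul.1 h
  rw [← hsplit, hzero, add_zero]
  refine Finset.sum_bij' (fun q hq => ((⟨q.1, ?_⟩ : ↥C), (⟨q.2, ?_⟩ : ↥C)))
    (fun q _ => ((q.1 : G), (q.2 : G))) ?_ ?_ ?_ ?_ ?_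
  · exact (Finset.mem_filter.1 hq).2.1
  · exact (Finset.mem_filter.1 hq).2.2
  · intro q hq
    simp only [Finset.mem_filter, hs, Finset.mem_univ, true_and] at hq ⊢
    exact hq.1
  · intro q hq
    simp only [Finset.mem_filter, hs, Finset.mem_univ, true_and] at hq ⊢
    exact ⟨hq, q.1.2, q.2.2⟩
  · intro q hq; rfl
  · intro q hq; rfl
  · intro q hq; rfl

end Mul

/-- For a field `k` of characteristic `p > 0`, a finite group `G` and a
`p`-subgroup `P` of `G`, the Brauer homomorphism `Br_P : (kG)^P → kC_G(P)`,
`∑ α_g g ↦ ∑_{g ∈ C_G(P)} α_g g`, is a surjective `k`-algebra homomorphism. -/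
theorem brauer_hom_surjective_algHom
    (p : ℕ) [Fact p.Prime] (k G : Type*) [Field k] [CharP k p] [Group G] [Fintype G]
    (P : Subgroup G) (hP : IsPGroup p P) :
    ∃ f : fixedSubalgebra k P →ₐ[k] MonoidAlgebra k ↥(Subgroup.centralizer (P : Set G)),
      (∀ (a : fixedSubalgebra k P), f a = BrauerMap P (a : MonoidAlgebra k G)) ∧
      Function.Surjective f := by
  classical
  set C := Subgroup.centralizer (P : Set G) with hC
  have hsingle : ∀ r : k, BrauerMap P (MonoidAlgebra.single (1 : G) r) =
      MonoidAlgebra.single (1 : ↥C) r := by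
    intro r
    ext x
    rw [show (BrauerMap P (MonoidAlgebra.single (1 : G) r)).coeff x =
      (MonoidAlgebra.single (1 : G) r).coeff (x : G) from rfl]
    rw [MonoidAlgebra.coeff_single, MonoidAlgebra.coeff_single, Finsupp.single_apply,
      Finsupp.single_apply]
    by_cases h : (1 : ↥C) = x
    · rw [if_pos (show (1 : G) = ↑x by rw [← h]; rfl), if_pos h]
    · rw [if_neg (show ¬(1 : G) = ↑x from fun hh => h (Subtype.ext hh)), if_neg h]
  refine ⟨{ toFun := fun a => BrauerMap P (a : MonoidAlgebra k G)
            map_one' := ?_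
            map_mul' := fun a b => ?_
            map_zero' := by simp [BrauerMap]
            map_add' := fun a b => ?_
            commutes' := fun r => ?_ }, fun a => rfl, ?_⟩
  · show BrauerMap P ((1 : fixedSubalgebra k P) : MonoidAlgebra k G) = 1
    rw [show ((1 : fixedSubalgebra k P) : MonoidAlgebra k G) =
      MonoidAlgebra.single (1 : G) (1 : k) from rfl]
    exact hsingle 1
  · show BrauerMap P ((a * b : fixedSubalgebra k P) : MonoidAlgebra k G) = _
    rw [MulMemClass.coe_mul]
    exact brauer_mul hP a.2 b.2
  · exact congrArg MonoidAlgebra.ofCoeff Finsupp.subtypeDomain_add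
  · show BrauerMap P ((algebraMap k (fixedSubalgebra k P) r : fixedSubalgebra k P) :
      MonoidAlgebra k G) = algebraMap k (MonoidAlgebra k ↥C) r
    rw [show ((algebraMap k (fixedSubalgebra k P) r : fixedSubalgebra k P) :
        MonoidAlgebra k G) = MonoidAlgebra.single (1 : G) r by
      simp [Subalgebra.coe_algebraMap, MonoidAlgebra.coe_algebraMap]]
    rw [hsingle r]
    simp [MonoidAlgebra.coe_algebraMap]
  · -- surjectivity
    intro b
    have hmem : (MonoidAlgebra.ofCoeff (Finsupp.extendDomain b.coeff) : MonoidAlgebra k G) ∈ fixedSubalgebra k P := by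
      intro x hx
      ext g
      rw [conjAct, MonoidAlgebra.domCongr_apply]
      have hsymm : (MulAut.conj x).symm g = x⁻¹ * g * x := by
        simp [MulAut.conj]
      rw [hsymm]
      rw [MonoidAlgebra.coeff_ofCoeff]
      rw [Finsupp.extendDomain_apply, Finsupp.extendDomain_apply]
      by_cases hg : g ∈ C
      · have hg' : x⁻¹ * g * x ∈ C := by
          have := conj_mem_centralizer (P := P) (inv_mem hx) hg
          simpa [mul_assoc] using this
        rw [dif_pos hg', dif_pos hg]
        congr 1
        have hcomm := (Subgroup.mem_centralizer_iff.1 hg) x hx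
        apply Subtype.ext
        show x⁻¹ * g * x = g
        rw [mul_assoc, ← hcomm]; group
      · have hg' : ¬ (x⁻¹ * g * x ∈ C) := by
          intro hmem'
          apply hg
          have := conj_mem_centralizer (P := P) hx hmem'
          simpa [mul_assoc] using this
        rw [dif_neg hg', dif_neg hg]
    refine ⟨⟨MonoidAlgebra.ofCoeff (Finsupp.extendDomain b.coeff), hmem⟩, ?_⟩
    show BrauerMap P (MonoidAlgebra.ofCoeff (Finsupp.extendDomain b.coeff)) = b
    exact congrArg MonoidAlgebra.ofCoeff (Finsupp.subtypeDomain_extendDomain b.coeff)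
end

section
/- Let L/K be a finite Galois extension of fields with Galois group Γ, acting coefficientwise on the group algebra LG of a finite group G. If b is a block idempotent (primitive central idempotent) of LG with stabilizer Γ_b in Γ, then b̃ := ∑_{γ ∈ Γ/Γ_b} γ(b) is a block idempotent of KG. -/
/-- A block idempotent of a ring: a primitive idempotent of its center, i.e. a nonzero central
idempotent which cannot be written as a sum of two nonzero orthogonal central idempotents. -/
def IsBlockIdempotent {R : Type*} [Ring R] (b : R) : Prop :=
  b ∈ Set.center R ∧ IsIdempotentElem b ∧ b ≠ 0 ∧
    ∀ c₁ c₂ : R, c₁ ∈ Set.center R → c₂ ∈ Set.center R →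
      IsIdempotentElem c₁ → IsIdempotentElem c₂ → c₁ * c₂ = 0 → b = c₁ + c₂ →
        c₁ = 0 ∨ c₂ = 0

/-- The coefficientwise action of a Galois automorphism `γ` on the group algebra `LG`. -/
noncomputable def galAct {K L : Type*} [Field K] [Field L] [Algebra K L] {G : Type*}
    (γ : L ≃ₐ[K] L) (a : MonoidAlgebra L G) : MonoidAlgebra L G :=
  MonoidAlgebra.ofCoeff (Finsupp.mapRange γ (map_zero γ) a.coeff)

/-- The sum of the distinct Galois conjugates `γ(b)`, `γ ∈ Γ`, of `b ∈ LG`. -/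
noncomputable def galOrbitSum (K : Type*) {L : Type*} [Field K] [Field L] [Algebra K L]
    [FiniteDimensional K L] {G : Type*} (b : MonoidAlgebra L G) : MonoidAlgebra L G :=
  ∑ c ∈ (Set.toFinite (Set.range fun γ : L ≃ₐ[K] L => galAct γ b)).toFinset, c

section Aux

lemma center_comm {R : Type*} [Ring R] {x : R} (hx : x ∈ Set.center R) (y : R) :
    x * y = y * x :=
  (Semigroup.mem_center_iff.mp hx y).symm

lemma mul_idem_of_comm {R : Type*} [Ring R] {e f : R} (hfe : f * e = e * f)
    (hei : e * e = e) (hfi : f * f = f) : (e * f) * (e * f) = e * f := by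
  rw [mul_assoc, ← mul_assoc f e f, hfe, mul_assoc e f f, hfi, ← mul_assoc, hei]

lemma block_mul_cases {R : Type*} [Ring R] {e f : R} (he : IsBlockIdempotent e)
    (hfc : f ∈ Set.center R) (hfi : IsIdempotentElem f) : e * f = 0 ∨ e = e * f := by
  obtain ⟨hec, hei, -, hep⟩ := he
  have hfe : f * e = e * f := center_comm hfc e
  have hidem : (e * f) * (e * f) = e * f := by
    rw [mul_assoc, ← mul_assoc f e f, hfe, mul_assoc e f f, hfi.eq, ← mul_assoc, hei.eq]
  have hefe : e * f * e = e * f := by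
    rw [mul_assoc, hfe, ← mul_assoc, hei.eq]
  have h1 := hep (e * f) (e - e * f) (Set.mul_mem_center hec hfc)
    (by rw [sub_eq_add_neg]
        exact Set.add_mem_center hec (Set.neg_mem_center (Set.mul_mem_center hec hfc)))
    hidem
    (by
      show (e - e * f) * (e - e * f) = e - e * f
      rw [sub_mul, mul_sub, mul_sub, hei.eq, hefe, hidem, ← mul_assoc, hei.eq]
      abel)
    (by rw [mul_sub, hefe, hidem, sub_self])
    (by abel)
  rcases h1 with h1 | h1
  · exact Or.inl h1
  · exact Or.inr (by rwa [sub_eq_zero] at h1)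

lemma blocks_orthogonal {R : Type*} [Ring R] {e f : R} (he : IsBlockIdempotent e)
    (hf : IsBlockIdempotent f) (hef : e ≠ f) : e * f = 0 := by
  have hfe : f * e = e * f := center_comm hf.1 e
  rcases block_mul_cases he hf.1 hf.2.1 with h1 | h1
  · exact h1
  · rcases block_mul_cases hf he.1 he.2.1 with h2 | h2
    · rw [← hfe, h2]
    · exact absurd (h1.trans (hfe.symm.trans h2.symm)) hef

end Aux

set_option linter.unusedSectionVars false

section MA

variable {R S : Type*} [Semiring R] [Semiring S] {G : Type*} [Monoid G]

/-- Coefficientwise map on monoid algebras, with the correct target type. -/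
noncomputable def mapCoe (f : R → S) (h0 : f 0 = 0) (a : MonoidAlgebra R G) : MonoidAlgebra S G :=
  MonoidAlgebra.ofCoeff (Finsupp.mapRange f h0 a.coeff)

lemma mapCoe_apply (f : R → S) (h0 : f 0 = 0) (a : MonoidAlgebra R G) (g : G) :
    (mapCoe f h0 a).coeff g = f (a.coeff g) :=
  Finsupp.mapRange_apply (hf := h0)

lemma mapCoe_zero (f : R → S) (h0 : f 0 = 0) : mapCoe f h0 (0 : MonoidAlgebra R G) = 0 :=
  congrArg MonoidAlgebra.ofCoeff Finsupp.mapRange_zero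

lemma mapCoe_single (f : R → S) (h0 : f 0 = 0) (g : G) (x : R) :
    mapCoe f h0 (MonoidAlgebra.single g x) = MonoidAlgebra.single g (f x) :=
  congrArg MonoidAlgebra.ofCoeff Finsupp.mapRange_single

lemma mapCoe_add (f : R → S) (h0 : f 0 = 0) (hadd : ∀ x y, f (x + y) = f x + f y)
    (a b : MonoidAlgebra R G) : mapCoe f h0 (a + b) = mapCoe f h0 a + mapCoe f h0 b :=
  congrArg MonoidAlgebra.ofCoeff (Finsupp.mapRange_add hadd a.coeff b.coeff)

lemma mapCoe_mul {f : R → S} (h0 : f 0 = 0)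
    (hadd : ∀ x y, f (x + y) = f x + f y) (hmul : ∀ x y, f (x * y) = f x * f y)
    (a b : MonoidAlgebra R G) :
    mapCoe f h0 (a * b) = mapCoe f h0 a * mapCoe f h0 b := by
  induction a using MonoidAlgebra.induction_linear with
  | zero => rw [zero_mul, mapCoe_zero, zero_mul]
  | add p q hp hq =>
      rw [add_mul, mapCoe_add f h0 hadd, mapCoe_add f h0 hadd, hp, hq, add_mul]
  | single g x =>
      induction b using MonoidAlgebra.induction_linear with
      | zero => rw [mul_zero, mapCoe_zero, mul_zero]
      | add p q hp hq =>
          rw [mul_add, mapCoe_add f h0 hadd, mapCoe_add f h0 hadd, hp, hq, mul_add]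
      | single h y =>
          show mapCoe f h0 (MonoidAlgebra.single g x * MonoidAlgebra.single h y) =
            mapCoe f h0 (MonoidAlgebra.single g x) * mapCoe f h0 (MonoidAlgebra.single h y)
          rw [MonoidAlgebra.single_mul_single, mapCoe_single, mapCoe_single, mapCoe_single,
            MonoidAlgebra.single_mul_single, hmul]

lemma mapCoe_injective {f : R → S} (h0 : f 0 = 0) (hf : Function.Injective f) :
    Function.Injective (mapCoe f h0 (G := G)) :=
  fun a b h => MonoidAlgebra.coeff_injective
    (Finsupp.mapRange_injective f h0 hf (congrArg MonoidAlgebra.coeff h))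

/-- centrality from commuting with group elements -/
lemma ma_mem_center {L : Type*} [CommSemiring L] {x : MonoidAlgebra L G}
    (h : ∀ g : G, MonoidAlgebra.single g (1 : L) * x = x * MonoidAlgebra.single g 1) :
    x ∈ Set.center (MonoidAlgebra L G) := by
  rw [Semigroup.mem_center_iff]
  intro y
  have hsc : ∀ (g : G) (c : L), MonoidAlgebra.single g c * x = x * MonoidAlgebra.single g c := by
    intro g c
    have h1 : (MonoidAlgebra.single g c : MonoidAlgebra L G) = c • MonoidAlgebra.single g 1 := by
      rw [MonoidAlgebra.smul_single, smul_eq_mul, mul_one]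
    rw [h1, smul_mul_assoc, h, mul_smul_comm]
  conv_lhs => rw [← MonoidAlgebra.sum_coeff_single y]
  conv_rhs => rw [← MonoidAlgebra.sum_coeff_single y]
  rw [Finsupp.sum_mul, Finsupp.mul_sum]
  exact Finsupp.sum_congr fun g _ => hsc g (y.coeff g)

end MA

section Gal

variable {K L : Type*} [Field K] [Field L] [Algebra K L] {G : Type*} [Group G]

lemma galAct_eq (γ : L ≃ₐ[K] L) (a : MonoidAlgebra L G) :
    galAct γ a = mapCoe (⇑γ) (map_zero γ) a := rfl

lemma galAct_mul (γ : L ≃ₐ[K] L) (a b : MonoidAlgebra L G) :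
    galAct γ (a * b) = galAct γ a * galAct γ b :=
  mapCoe_mul (map_zero γ) (map_add γ) (map_mul γ) a b

lemma galAct_add (γ : L ≃ₐ[K] L) (a b : MonoidAlgebra L G) :
    galAct γ (a + b) = galAct γ a + galAct γ b :=
  mapCoe_add _ _ (map_add γ) a b

lemma galAct_zero (γ : L ≃ₐ[K] L) : galAct γ (0 : MonoidAlgebra L G) = 0 :=
  mapCoe_zero _ _

lemma galAct_apply (γ : L ≃ₐ[K] L) (a : MonoidAlgebra L G) (g : G) :
    (galAct γ a).coeff g = γ (a.coeff g) :=
  Finsupp.mapRange_apply (hf := map_zero γ)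

lemma galAct_comp (γ δ : L ≃ₐ[K] L) (a : MonoidAlgebra L G) :
    galAct γ (galAct δ a) = galAct (γ * δ) a := by
  ext g
  rw [galAct_apply, galAct_apply, galAct_apply, AlgEquiv.mul_apply]

lemma galAct_one (a : MonoidAlgebra L G) : galAct (1 : L ≃ₐ[K] L) a = a := by
  ext g
  rw [galAct_apply, AlgEquiv.one_apply]

lemma galAct_inv_cancel (γ : L ≃ₐ[K] L) (a : MonoidAlgebra L G) :
    galAct γ (galAct γ⁻¹ a) = a := by
  rw [galAct_comp, mul_inv_cancel, galAct_one]

lemma galAct_inv_cancel' (γ : L ≃ₐ[K] L) (a : MonoidAlgebra L G) :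
    galAct γ⁻¹ (galAct γ a) = a := by
  rw [galAct_comp, inv_mul_cancel, galAct_one]

lemma galAct_injective (γ : L ≃ₐ[K] L) : Function.Injective (galAct γ (G := G)) :=
  fun a b h => by rw [← galAct_inv_cancel' γ a, h, galAct_inv_cancel']

lemma galAct_eq_zero_iff (γ : L ≃ₐ[K] L) {a : MonoidAlgebra L G} :
    galAct γ a = 0 ↔ a = 0 :=
  ⟨fun h => galAct_injective γ (h.trans (galAct_zero γ).symm), fun h => h ▸ galAct_zero γ⟩

lemma galAct_mem_center (γ : L ≃ₐ[K] L) {a : MonoidAlgebra L G}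
    (ha : a ∈ Set.center (MonoidAlgebra L G)) : galAct γ a ∈ Set.center (MonoidAlgebra L G) := by
  rw [Semigroup.mem_center_iff]
  intro y
  have hy : y = galAct γ (galAct γ⁻¹ y) := (galAct_inv_cancel γ y).symm
  rw [hy, ← galAct_mul, ← galAct_mul, center_comm ha]

lemma IsBlockIdempotent.galAct {γ : L ≃ₐ[K] L} {b : MonoidAlgebra L G}
    (hb : IsBlockIdempotent b) : IsBlockIdempotent (_root_.galAct γ b) := by
  obtain ⟨hc, hi, hne, hp⟩ := hb
  refine ⟨galAct_mem_center γ hc, ?_, ?_, ?_⟩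
  · show _root_.galAct γ b * _root_.galAct γ b = _root_.galAct γ b
    rw [← galAct_mul, hi.eq]
  · exact fun h => hne ((galAct_eq_zero_iff γ).mp h)
  · intro c₁ c₂ hc₁ hc₂ hi₁ hi₂ ho hs
    have h1 : b = _root_.galAct γ⁻¹ c₁ + _root_.galAct γ⁻¹ c₂ := by
      have := congrArg (_root_.galAct γ⁻¹) hs
      rwa [galAct_inv_cancel', galAct_add] at this
    have := hp (_root_.galAct γ⁻¹ c₁) (_root_.galAct γ⁻¹ c₂)
      (galAct_mem_center γ⁻¹ hc₁) (galAct_mem_center γ⁻¹ hc₂)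
      (by show _ * _ = _; rw [← galAct_mul, hi₁.eq])
      (by show _ * _ = _; rw [← galAct_mul, hi₂.eq])
      (by rw [← galAct_mul, ho, galAct_zero]) h1
    rcases this with h | h
    · exact Or.inl ((galAct_eq_zero_iff γ⁻¹).mp h)
    · exact Or.inr ((galAct_eq_zero_iff γ⁻¹).mp h)

end Gal

section Fixed

variable {K L : Type*} [Field K] [Field L] [Algebra K L] [FiniteDimensional K L] [IsGalois K L]

lemma fixed_mem_range {x : L} (hx : ∀ γ : L ≃ₐ[K] L, γ x = x) :
    ∃ k : K, algebraMap K L k = x := by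
  have h1 : x ∈ IntermediateField.fixedField
      (IntermediateField.fixingSubgroup (⊥ : IntermediateField K L)) := by
    intro γ
    exact hx γ
  rw [IsGalois.fixedField_fixingSubgroup] at h1
  exact IntermediateField.mem_bot.mp h1

end Fixed

section Embed

variable {K L : Type*} [Field K] [Field L] [Algebra K L] {G : Type*} [Group G]

noncomputable def embedMA (K L : Type*) [Field K] [Field L] [Algebra K L] (G : Type*) :
    MonoidAlgebra K G → MonoidAlgebra L G :=
  mapCoe (algebraMap K L) (map_zero _)

lemma embedMA_eq (c : MonoidAlgebra K G) :
    embedMA K L G c = MonoidAlgebra.ofCoeff (Finsupp.mapRange (algebraMap K L) (map_zero _) c.coeff) := rfl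

lemma embedMA_apply (c : MonoidAlgebra K G) (g : G) :
    (embedMA K L G c).coeff g = algebraMap K L (c.coeff g) :=
  mapCoe_apply _ _ _ _

lemma embedMA_mul (a b : MonoidAlgebra K G) :
    embedMA K L G (a * b) = embedMA K L G a * embedMA K L G b :=
  mapCoe_mul _ (map_add _) (map_mul _) a b

lemma embedMA_add (a b : MonoidAlgebra K G) :
    embedMA K L G (a + b) = embedMA K L G a + embedMA K L G b :=
  mapCoe_add _ _ (map_add _) a b

lemma embedMA_zero : embedMA K L G (0 : MonoidAlgebra K G) = 0 :=
  mapCoe_zero _ _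

lemma embedMA_injective : Function.Injective (embedMA K L G) :=
  mapCoe_injective _ (algebraMap K L).injective

lemma embedMA_eq_zero_iff {a : MonoidAlgebra K G} : embedMA K L G a = 0 ↔ a = 0 :=
  ⟨fun h => embedMA_injective (h.trans embedMA_zero.symm), fun h => h ▸ embedMA_zero⟩

lemma embedMA_single_one (g : G) :
    embedMA K L G (MonoidAlgebra.single g 1) = MonoidAlgebra.single g 1 := by
  rw [embedMA, mapCoe_single, map_one]

lemma galAct_embedMA (γ : L ≃ₐ[K] L) (c : MonoidAlgebra K G) :
    galAct γ (embedMA K L G c) = embedMA K L G c := by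
  ext g
  rw [galAct_apply]
  show γ (Finsupp.mapRange (algebraMap K L) (map_zero _) c.coeff g) = _
  rw [Finsupp.mapRange_apply, AlgEquiv.commutes]
  rfl

lemma embedMA_center {c : MonoidAlgebra K G} (hc : c ∈ Set.center (MonoidAlgebra K G)) :
    embedMA K L G c ∈ Set.center (MonoidAlgebra L G) := by
  apply ma_mem_center
  intro g
  rw [← embedMA_single_one (K := K) (L := L) g, ← embedMA_mul, ← embedMA_mul,
    center_comm hc]

end Embed

/-- For a finite Galois extension `L/K` of fields, with the Galois group acting
coefficientwise on `LG`, and a block idempotent `b` of `LG`, the sum `b̃` of the distinct Galois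
conjugates of `b` is a block idempotent of `KG` (i.e. it is the image of a block idempotent of
`KG` under the coefficient embedding `KG → LG`). -/
theorem galOrbitSum_isBlockIdempotent
    (K L : Type*) [Field K] [Field L] [Algebra K L] [FiniteDimensional K L] [IsGalois K L]
    (G : Type*) [Group G] [Fintype G]
    (b : MonoidAlgebra L G) (hb : IsBlockIdempotent b) :
    ∃ b' : MonoidAlgebra K G,
      Finsupp.mapRange (algebraMap K L) (map_zero _) b'.coeff = (galOrbitSum K b).coeff ∧
      IsBlockIdempotent b' := by
  classical
  set S : Finset (MonoidAlgebra L G) :=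
    (Set.toFinite (Set.range fun γ : L ≃ₐ[K] L => galAct γ b)).toFinset with hSdef
  have hmem : ∀ {c : MonoidAlgebra L G}, c ∈ S ↔ ∃ γ : L ≃ₐ[K] L, galAct γ b = c := by
    intro c
    rw [hSdef, Set.Finite.mem_toFinset]
    exact Set.mem_range
  have hbS : b ∈ S := hmem.mpr ⟨1, galAct_one b⟩
  have hblock : ∀ c ∈ S, IsBlockIdempotent c := by
    intro c hc
    obtain ⟨γ, rfl⟩ := hmem.mp hc
    exact hb.galAct
  set s : MonoidAlgebra L G := ∑ c ∈ S, c with hs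
  have hsorb : galOrbitSum K b = s := rfl
  -- s left-absorbs every element of the orbit
  have key1 : ∀ c' ∈ S, s * c' = c' := by
    intro c' hc'
    rw [hs, Finset.sum_mul, Finset.sum_eq_single c']
    · exact (hblock c' hc').2.1.eq
    · intro c hc hne
      exact blocks_orthogonal (hblock c hc) (hblock c' hc') hne
    · intro h
      exact absurd hc' h
  have hcenter : s ∈ Set.center (MonoidAlgebra L G) := by
    rw [Semigroup.mem_center_iff]
    intro y
    rw [hs, Finset.sum_mul, Finset.mul_sum]
    exact Finset.sum_congr rfl fun c hc => (center_comm (hblock c hc).1 y).symm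
  have hsb : s * b = b := key1 b hbS
  have hs_ne : s ≠ 0 := fun h => hb.2.2.1 (by rw [← hsb, h, zero_mul])
  have hidem : IsIdempotentElem s := by
    show s * s = s
    nth_rewrite 2 [hs]
    rw [Finset.mul_sum, Finset.sum_congr rfl key1]
  -- Galois invariance of s
  have hSim : ∀ γ : L ≃ₐ[K] L, S.image (galAct γ) = S := by
    intro γ
    ext c
    simp only [Finset.mem_image]
    constructor
    · rintro ⟨d, hd, rfl⟩
      obtain ⟨δ, rfl⟩ := hmem.mp hd
      exact hmem.mpr ⟨γ * δ, (galAct_comp γ δ b).symm⟩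
    · intro hc
      obtain ⟨δ, rfl⟩ := hmem.mp hc
      exact ⟨galAct (γ⁻¹ * δ) b, hmem.mpr ⟨γ⁻¹ * δ, rfl⟩,
        by rw [galAct_comp, mul_inv_cancel_left]⟩
  have hinv : ∀ γ : L ≃ₐ[K] L, galAct γ s = s := by
    intro γ
    rw [hs]
    calc galAct γ (∑ c ∈ S, c) = ∑ c ∈ S, galAct γ c :=
          map_sum (AddMonoidHom.mk ⟨galAct γ, galAct_zero γ⟩ (galAct_add γ)) id S
      _ = ∑ c ∈ S.image (galAct γ), c :=
          (Finset.sum_image (f := fun c => c) (g := galAct γ) (s := S)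
            (fun x _ y _ h => galAct_injective γ h)).symm
      _ = ∑ c ∈ S, c := by rw [hSim γ]
  -- coefficients of s are Galois-fixed, hence in K
  have hfix : ∀ g : G, ∃ k : K, algebraMap K L k = s.coeff g := by
    intro g
    apply fixed_mem_range
    intro γ
    conv_rhs => rw [← hinv γ]
    rw [galAct_apply]
  choose r hr using hfix
  have hEb' : embedMA K L G (MonoidAlgebra.ofCoeff (Finsupp.equivFunOnFinite.symm r)) = s := by
    ext g
    rw [embedMA_apply]
    exact hr g
  refine ⟨MonoidAlgebra.ofCoeff (Finsupp.equivFunOnFinite.symm r), ?_, ?_, ?_, ?_, ?_⟩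
  · -- maps to the orbit sum
    rw [hsorb]
    exact congrArg MonoidAlgebra.coeff hEb'
  · -- central
    rw [Semigroup.mem_center_iff]
    intro y
    apply embedMA_injective (K := K) (L := L) (G := G)
    rw [embedMA_mul, embedMA_mul, hEb']
    exact (center_comm hcenter _).symm
  · -- idempotent
    show _ * _ = _
    apply embedMA_injective (K := K) (L := L) (G := G)
    rw [embedMA_mul, hEb']
    exact hidem
  · -- nonzero
    intro h
    apply hs_ne
    rw [← hEb', h, embedMA_zero]
  · -- primitive
    intro c₁ c₂ hc₁ hc₂ hi₁ hi₂ ho hsum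
    have hd₁c := embedMA_center (L := L) hc₁
    have hd₂c := embedMA_center (L := L) hc₂
    have hd₁i : embedMA K L G c₁ * embedMA K L G c₁ = embedMA K L G c₁ := by
      rw [← embedMA_mul, hi₁.eq]
    have hd₂i : embedMA K L G c₂ * embedMA K L G c₂ = embedMA K L G c₂ := by
      rw [← embedMA_mul, hi₂.eq]
    have hdo : embedMA K L G c₁ * embedMA K L G c₂ = 0 := by
      rw [← embedMA_mul, ho, embedMA_zero]
    have hssum : s = embedMA K L G c₁ + embedMA K L G c₂ := by
      have h0 := congrArg (embedMA K L G) hsum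
      rwa [embedMA_add, hEb'] at h0
    have hbd : b = b * embedMA K L G c₁ + b * embedMA K L G c₂ := by
      have h1 : b = s * b := hsb.symm
      rwa [hssum, add_mul, center_comm hd₁c b, center_comm hd₂c b] at h1
    have hI1 : IsIdempotentElem (b * embedMA K L G c₁) :=
      mul_idem_of_comm (center_comm hd₁c b) hb.2.1.eq hd₁i
    have hI2 : IsIdempotentElem (b * embedMA K L G c₂) :=
      mul_idem_of_comm (center_comm hd₂c b) hb.2.1.eq hd₂i
    have horth : (b * embedMA K L G c₁) * (b * embedMA K L G c₂) = 0 := by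
      rw [mul_assoc, ← mul_assoc (embedMA K L G c₁) b (embedMA K L G c₂),
        center_comm hd₁c b, mul_assoc b (embedMA K L G c₁) (embedMA K L G c₂), hdo,
        mul_zero, mul_zero]
    rcases hb.2.2.2 (b * embedMA K L G c₁) (b * embedMA K L G c₂)
      (Set.mul_mem_center hb.1 hd₁c) (Set.mul_mem_center hb.1 hd₂c) hI1 hI2 horth hbd with h | h
    · left
      have hall : ∀ c ∈ S, c * embedMA K L G c₁ = 0 := by
        intro c hc
        obtain ⟨γ, rfl⟩ := hmem.mp hc
        have h2 := congrArg (galAct γ) h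
        rwa [galAct_mul, galAct_embedMA, galAct_zero] at h2
      have hsd : s * embedMA K L G c₁ = 0 := by
        rw [hs, Finset.sum_mul]
        exact Finset.sum_eq_zero hall
      have h3 : s * embedMA K L G c₁ = embedMA K L G c₁ := by
        rw [hssum, add_mul, hd₁i, center_comm hd₂c (embedMA K L G c₁), hdo, add_zero]
      have h4 : embedMA K L G c₁ = 0 := by rw [← h3, hsd]
      exact embedMA_eq_zero_iff.mp h4
    · right
      have hall : ∀ c ∈ S, c * embedMA K L G c₂ = 0 := by
        intro c hc
        obtain ⟨γ, rfl⟩ := hmem.mp hc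
        have h2 := congrArg (galAct γ) h
        rwa [galAct_mul, galAct_embedMA, galAct_zero] at h2
      have hsd : s * embedMA K L G c₂ = 0 := by
        rw [hs, Finset.sum_mul]
        exact Finset.sum_eq_zero hall
      have h3 : s * embedMA K L G c₂ = embedMA K L G c₂ := by
        rw [hssum, add_mul, hd₂i, hdo, zero_add]
      have h4 : embedMA K L G c₂ = 0 := by rw [← h3, hsd]
      exact embedMA_eq_zero_iff.mp h4
end

section
/- Let L/K be a finite Galois extension of fields of characteristic p > 0 with Galois group Γ, G a finite group, b a block idempotent of LG, and b̃ the corresponding block idempotent of KG (the sum of the distinct Γ-conjugates of b). Then b and b̃ have the same defect groups: a p-subgroup P of G is a defect group of b if and only if it is a defect group of b̃. -/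
/-- The Brauer homomorphism with respect to `P`, viewed as the projection of `kG` onto the
coefficients supported on the centralizer `C_G(P)`. -/
noncomputable def Br {k G : Type*} [Field k] [Group G] (P : Subgroup G)
    (a : MonoidAlgebra k G) : MonoidAlgebra k G :=
  @Finsupp.filter G k _ (· ∈ Subgroup.centralizer (P : Set G)) (Classical.decPred _) a.coeff |> MonoidAlgebra.ofCoeff

/-- `P` is a defect group of the block idempotent `c` of `kG`: `P` is a `p`-subgroup, maximal
among the `p`-subgroups `Q` of `G` with `Br_Q(c) ≠ 0`. -/
def IsDefectGroup (p : ℕ) {k G : Type*} [Field k] [Group G] (c : MonoidAlgebra k G)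
    (P : Subgroup G) : Prop :=
  IsPGroup p ↥P ∧ Br P c ≠ 0 ∧
    ∀ Q : Subgroup G, IsPGroup p ↥Q → P ≤ Q → Br Q c ≠ 0 → Q = P

section Aux

variable {k : Type*} [Field k] {G : Type*} [Group G]

open scoped Classical in
lemma Br_apply (P : Subgroup G) (a : MonoidAlgebra k G) (g : G) :
    (Br P a).coeff g = if g ∈ Subgroup.centralizer (P : Set G) then a.coeff g else 0 := by
  exact if_congr Iff.rfl rfl rfl

lemma mul_apply_conv [Fintype G] (a b : MonoidAlgebra k G) (g : G) :
    (a * b).coeff g = ∑ x : G, a.coeff x * b.coeff (x⁻¹ * g) := by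
  classical
  have h : a = ∑ x : G, MonoidAlgebra.single x (a.coeff x) := by
    ext y
    rw [MonoidAlgebra.coeff_sum, Finset.sum_apply']
    simp [Finsupp.single_apply]
  conv_lhs => rw [h]
  rw [Finset.sum_mul, MonoidAlgebra.coeff_sum, Finset.sum_apply']
  simp [MonoidAlgebra.coeff_single_mul_apply]

lemma center_conj_apply {a : MonoidAlgebra k G}
    (ha : a ∈ Set.center (MonoidAlgebra k G)) (h x : G) :
    a.coeff (h * x * h⁻¹) = a.coeff x := by
  have := Semigroup.mem_center_iff.mp ha (MonoidAlgebra.single h 1)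
  have h1 := congrArg (fun f : MonoidAlgebra k G => f.coeff (h * x)) this
  simpa [MonoidAlgebra.coeff_single_mul_apply, MonoidAlgebra.coeff_mul_single_apply] using h1.symm

lemma conj_mem_centralizer_s5 {Q : Subgroup G} {g q : G}
    (hg : g ∈ Subgroup.centralizer (Q : Set G)) (hq : q ∈ Q) :
    q * g * q⁻¹ ∈ Subgroup.centralizer (Q : Set G) := by
  rw [Subgroup.mem_centralizer_iff] at hg ⊢
  intro h hh
  have h1 := hg (q⁻¹ * h * q) (Q.mul_mem (Q.mul_mem (Q.inv_mem hq) hh) hq)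
  have h2 : h * (q * g * q⁻¹) = q * ((q⁻¹ * h * q) * g) * q⁻¹ := by group
  rw [h2, h1]; group

open scoped Classical in
lemma sum_noncentral_eq_zero (p : ℕ) [Fact p.Prime] [CharP k p] [Fintype G]
    (Q : Subgroup G) (hQ : IsPGroup p ↥Q) (f : G → k)
    (hf : ∀ q ∈ Q, ∀ x : G, f (q * x * q⁻¹) = f x) :
    ∑ x ∈ Finset.univ.filter (fun x => x ∉ Subgroup.centralizer (Q : Set G)), f x = 0 := by
  classical
  set Q' : Subgroup (ConjAct G) := Q.map ConjAct.toConjAct.toMonoidHom with hQ'def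
  have hQ'p : IsPGroup p ↥Q' := hQ.map _
  have horb : ∀ x a : G, a ∈ MulAction.orbit ↥Q' x ↔ ∃ q ∈ Q, q * x * q⁻¹ = a := by
    intro x a
    constructor
    · rintro ⟨⟨g, hg⟩, rfl⟩
      obtain ⟨q, hq, rfl⟩ := hg
      refine ⟨q, hq, ?_⟩
      simp [Submonoid.smul_def, ConjAct.smul_def]
    · rintro ⟨q, hq, rfl⟩
      refine ⟨⟨ConjAct.toConjAct q, Subgroup.mem_map_of_mem _ hq⟩, ?_⟩
      change ConjAct.toConjAct q • x = q * x * q⁻¹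
      simp [ConjAct.smul_def]
  refine Finset.sum_cancels_of_partition_cancels (MulAction.orbitRel ↥Q' G) ?_
  intro x hx
  have hx' : x ∉ Subgroup.centralizer (Q : Set G) := (Finset.mem_filter.mp hx).2
  have hOsub : ∀ a ∈ MulAction.orbit ↥Q' x, a ∉ Subgroup.centralizer (Q : Set G) := by
    rintro a ha hc
    obtain ⟨q, hq, rfl⟩ := (horb x a).mp ha
    apply hx'
    have := conj_mem_centralizer_s5 (g := q * x * q⁻¹) (q := q⁻¹) hc (Q.inv_mem hq)
    simpa [mul_assoc] using this
  have hfiber : (Finset.univ.filter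
        (fun a : G => a ∉ Subgroup.centralizer (Q : Set G))).filter
      (fun a => (MulAction.orbitRel ↥Q' G) a x) = (MulAction.orbit ↥Q' x).toFinset := by
    ext a
    simp only [Finset.mem_filter, Finset.mem_univ, true_and, Set.mem_toFinset]
    constructor
    · rintro ⟨-, h⟩
      exact h
    · intro h
      exact ⟨hOsub a h, h⟩
  have hconst : ∀ a ∈ (MulAction.orbit ↥Q' x).toFinset, f a = f x := by
    intro a ha
    obtain ⟨q, hq, rfl⟩ := (horb x a).mp (Set.mem_toFinset.mp ha)
    exact hf q hq x
  rw [hfiber, Finset.sum_congr rfl hconst, Finset.sum_const]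
  obtain ⟨n, hn⟩ := hQ'p.card_orbit x
  have hx'' : x ∉ MulAction.fixedPoints ↥Q' G := by
    intro hfix
    apply hx'
    rw [Subgroup.mem_centralizer_iff]
    intro h hh
    have h2 : h * x * h⁻¹ = x := by
      have h1 : ConjAct.toConjAct h • x = x :=
        (MulAction.mem_fixedPoints.mp hfix ⟨ConjAct.toConjAct h, Subgroup.mem_map_of_mem _ hh⟩)
      simpa [ConjAct.smul_def] using h1
    have h3 := congrArg (· * h) h2
    simpa [mul_assoc] using h3
  have hn1 : n ≠ 0 := by
    rintro rfl
    rw [pow_zero] at hn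
    exact hx'' (MulAction.mem_fixedPoints_iff_card_orbit_eq_one.mpr
      (by rw [← Nat.card_eq_fintype_card]; exact hn))
  have hcard : (MulAction.orbit ↥Q' x).toFinset.card = p ^ n := by
    rw [Set.toFinset_card, ← Nat.card_eq_fintype_card]; exact hn
  rw [hcard, nsmul_eq_mul]
  have hp0 : ((p : k)) = 0 := CharP.cast_eq_zero k p
  simp [hp0, zero_pow hn1]

lemma Br_mul (p : ℕ) [Fact p.Prime] [CharP k p] [Fintype G] (Q : Subgroup G)
    (hQ : IsPGroup p ↥Q) {a b : MonoidAlgebra k G}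
    (ha : a ∈ Set.center (MonoidAlgebra k G)) (hb : b ∈ Set.center (MonoidAlgebra k G)) :
    Br Q (a * b) = Br Q a * Br Q b := by
  classical
  ext g
  rw [Br_apply]
  by_cases hg : g ∈ Subgroup.centralizer (Q : Set G)
  · rw [if_pos hg, mul_apply_conv, mul_apply_conv]
    have hterm : ∀ x : G, (Br Q a).coeff x * (Br Q b).coeff (x⁻¹ * g) =
        if x ∈ Subgroup.centralizer (Q : Set G) then a.coeff x * b.coeff (x⁻¹ * g) else 0 := by
      intro x
      rw [Br_apply, Br_apply]
      by_cases hx : x ∈ Subgroup.centralizer (Q : Set G)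
      · rw [if_pos hx, if_pos hx,
          if_pos ((Subgroup.centralizer (Q : Set G)).mul_mem
            ((Subgroup.centralizer (Q : Set G)).inv_mem hx) hg)]
      · rw [if_neg hx, if_neg hx, zero_mul]
    rw [Finset.sum_congr rfl (fun x _ => hterm x), ← Finset.sum_filter,
      ← Finset.sum_filter_add_sum_filter_not Finset.univ
        (fun x => x ∈ Subgroup.centralizer (Q : Set G)) (fun x => a.coeff x * b.coeff (x⁻¹ * g))]
    have hzero : ∑ x ∈ Finset.univ.filter
        (fun x => x ∉ Subgroup.centralizer (Q : Set G)), a.coeff x * b.coeff (x⁻¹ * g) = 0 := by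
      refine sum_noncentral_eq_zero p Q hQ _ ?_
      intro q hq x
      have hc : q⁻¹ * g = g * q⁻¹ :=
        Subgroup.mem_centralizer_iff.mp hg q⁻¹ (Q.inv_mem hq)
      have e1 : (q * x * q⁻¹)⁻¹ * g = q * (x⁻¹ * g) * q⁻¹ := by
        rw [show (q * x * q⁻¹)⁻¹ = q * x⁻¹ * q⁻¹ by group]
        calc q * x⁻¹ * q⁻¹ * g = q * x⁻¹ * (q⁻¹ * g) := by group
          _ = q * x⁻¹ * (g * q⁻¹) := by rw [hc]
          _ = q * (x⁻¹ * g) * q⁻¹ := by group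
      rw [e1, center_conj_apply ha, center_conj_apply hb]
    rw [hzero, add_zero]
  · rw [if_neg hg]
    symm
    rw [mul_apply_conv]
    apply Finset.sum_eq_zero
    intro x _
    rw [Br_apply, Br_apply]
    by_cases hx : x ∈ Subgroup.centralizer (Q : Set G)
    · rw [if_pos hx, if_neg, mul_zero]
      intro hxg
      exact hg (by simpa using (Subgroup.centralizer (Q : Set G)).mul_mem hx hxg)
    · rw [if_neg hx, zero_mul]

end Aux

section Aux2

lemma IsBlockIdempotent.mul_eq_zero_of_ne {R : Type*} [Ring R] {b c : R}
    (hb : IsBlockIdempotent b) (hc : IsBlockIdempotent c) (h : b ≠ c) : b * c = 0 := by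
  obtain ⟨hbz, hbi, hbn, hbp⟩ := hb
  obtain ⟨hcz, hci, hcn, hcp⟩ := hc
  have hbcomm : ∀ x : R, x * b = b * x := fun x => Semigroup.mem_center_iff.mp hbz x
  have hccomm : ∀ x : R, x * c = c * x := fun x => Semigroup.mem_center_iff.mp hcz x
  set e := b * c with he
  have heb : b * e = e := by rw [he, ← mul_assoc, hbi]
  have hec : e * c = e := by rw [he, mul_assoc, hci]
  have hbe' : e * b = e := by
    rw [he, mul_assoc, show c * b = b * c from hbcomm c, ← mul_assoc, hbi]
  have hce' : c * e = e := by
    rw [he, ← mul_assoc, show c * b = b * c from hbcomm c, mul_assoc, hci]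
  have hee : IsIdempotentElem e := by
    show e * e = e
    conv_lhs => rw [he]
    rw [mul_assoc, hce', heb]
  have hez : e ∈ Set.center R := by
    rw [Semigroup.mem_center_iff]
    intro g
    rw [he, ← mul_assoc, hbcomm g, mul_assoc, hccomm g, ← mul_assoc]
  by_cases he0 : e = 0
  · exact he0
  · exfalso
    -- b = e + (b - e)
    have hbe : b = e + (b - e) := by abel
    have hbez : b - e ∈ Set.center R := by
      rw [Semigroup.mem_center_iff]
      intro g
      rw [mul_sub, sub_mul, hbcomm g, Semigroup.mem_center_iff.mp hez g]
    have hbei : IsIdempotentElem (b - e) := by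
      rw [IsIdempotentElem, sub_mul, mul_sub, mul_sub, hbi, heb, hbe', hee]
      abel
    have hbemul : e * (b - e) = 0 := by
      rw [mul_sub, hbe', hee, sub_self]
    rcases hbp e (b - e) hez hbez hee hbei hbemul hbe with h0 | h0
    · exact he0 h0
    · have hb_eq : b = e := by rwa [sub_eq_zero] at h0
      -- c = e + (c - e)
      have hce : c = e + (c - e) := by abel
      have hcez : c - e ∈ Set.center R := by
        rw [Semigroup.mem_center_iff]
        intro g
        rw [mul_sub, sub_mul, hccomm g, Semigroup.mem_center_iff.mp hez g]
      have hcei : IsIdempotentElem (c - e) := by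
        rw [IsIdempotentElem, sub_mul, mul_sub, mul_sub, hci, hce', hec, hee]
        abel
      have hcemul : e * (c - e) = 0 := by
        rw [mul_sub, hec, hee, sub_self]
      rcases hcp e (c - e) hez hcez hee hcei hcemul hce with h1 | h1
      · exact he0 h1
      · have hc_eq : c = e := by rwa [sub_eq_zero] at h1
        exact h (hb_eq.trans hc_eq.symm)

lemma center_map {R S : Type*} [Ring R] [Ring S] (e : R ≃+* S) {b : R}
    (h : b ∈ Set.center R) : e b ∈ Set.center S := by
  rw [Semigroup.mem_center_iff] at h ⊢
  intro g
  have := congrArg e (h (e.symm g))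
  simpa [map_mul] using this

lemma IsBlockIdempotent.map {R S : Type*} [Ring R] [Ring S] (e : R ≃+* S) {b : R}
    (h : IsBlockIdempotent b) : IsBlockIdempotent (e b) := by
  obtain ⟨h1, h2, h3, h4⟩ := h
  refine ⟨center_map e h1, ?_, ?_, ?_⟩
  · rw [IsIdempotentElem, ← map_mul, h2]
  · intro h0
    apply h3
    have := congrArg e.symm h0
    simpa using this
  · intro c₁ c₂ hc₁ hc₂ hi₁ hi₂ hmul hsum
    have hsum' : b = e.symm c₁ + e.symm c₂ := by
      have := congrArg e.symm hsum
      simpa [map_add] using this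
    rcases h4 (e.symm c₁) (e.symm c₂) (center_map e.symm hc₁) (center_map e.symm hc₂)
        (by rw [IsIdempotentElem, ← map_mul, hi₁]) (by rw [IsIdempotentElem, ← map_mul, hi₂])
        (by rw [← map_mul, hmul, map_zero]) hsum' with h0 | h0
    · left
      have := congrArg e h0
      simpa using this
    · right
      have := congrArg e h0
      simpa using this

variable {K L : Type*} [Field K] [Field L] [Algebra K L] {G : Type*} [Group G]

noncomputable def galActRingEquiv [Fintype G] (γ : L ≃ₐ[K] L) :
    MonoidAlgebra L G ≃+* MonoidAlgebra L G where
  toFun := galAct γ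
  invFun := galAct γ.symm
  left_inv a := by
    ext g
    show γ.symm (γ (a.coeff g)) = a.coeff g
    simp
  right_inv a := by
    ext g
    show γ (γ.symm (a.coeff g)) = a.coeff g
    simp
  map_add' a b := by
    ext g
    show (galAct γ (a + b)).coeff g = (galAct γ a + galAct γ b).coeff g
    simp only [galAct_apply, MonoidAlgebra.coeff_add, Finsupp.add_apply]
    exact map_add γ _ _
  map_mul' a b := by
    ext g
    show (galAct γ (a * b)).coeff g = (galAct γ a * galAct γ b).coeff g
    rw [galAct_apply, mul_apply_conv, mul_apply_conv, map_sum]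
    simp [galAct_apply, map_mul]

lemma Br_mapRange {k l : Type*} [Field k] [Field l] (f : k → l) (h0 : f 0 = 0)
    (Q : Subgroup G) (a : MonoidAlgebra k G) :
    Br Q (MonoidAlgebra.ofCoeff (Finsupp.mapRange f h0 a.coeff)) =
      MonoidAlgebra.ofCoeff (Finsupp.mapRange f h0 (Br Q a).coeff) := by
  ext g
  rw [Br_apply]
  simp only [MonoidAlgebra.coeff_ofCoeff, Finsupp.mapRange_apply]
  rw [Br_apply]
  split_ifs with h
  · rfl
  · exact h0.symm

lemma Br_sum {k : Type*} [Field k] (Q : Subgroup G) {ι : Type*} (s : Finset ι)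
    (f : ι → MonoidAlgebra k G) : Br Q (∑ i ∈ s, f i) = ∑ i ∈ s, Br Q (f i) := by
  ext g
  rw [Br_apply]
  split_ifs with h
  · simp only [MonoidAlgebra.coeff_sum, Finset.sum_apply']
    exact Finset.sum_congr rfl fun i _ => by rw [Br_apply, if_pos h]
  · symm
    rw [MonoidAlgebra.coeff_sum, Finset.sum_apply']
    exact Finset.sum_eq_zero fun i _ => by rw [Br_apply, if_neg h]

end Aux2

/-- Let `L/K` be a finite Galois extension of fields of characteristic `p > 0`,
`b` a block idempotent of `LG` and `b'` the corresponding block idempotent of `KG` (whose image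
in `LG` is the sum `b̃` of the distinct Galois conjugates of `b`). Then `b` and `b'` have the
same defect groups. -/
theorem block_and_galOrbitSum_same_defect_groups
    (p : ℕ) [Fact p.Prime]
    (K L : Type*) [Field K] [Field L] [Algebra K L] [FiniteDimensional K L] [IsGalois K L]
    [CharP K p] [CharP L p]
    (G : Type*) [Group G] [Fintype G]
    (b : MonoidAlgebra L G) (hb : IsBlockIdempotent b)
    (b' : MonoidAlgebra K G)
    (hb' : Finsupp.mapRange (algebraMap K L) (map_zero _) b'.coeff = (galOrbitSum K b).coeff)
    (P : Subgroup G) :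
    IsDefectGroup p b P ↔ IsDefectGroup p b' P := by
  classical
  set T := (Set.toFinite (Set.range fun γ : L ≃ₐ[K] L => galAct γ b)).toFinset with hT
  have hmemT : ∀ c, c ∈ T ↔ ∃ γ : L ≃ₐ[K] L, galAct γ b = c := by
    intro c
    rw [hT, Set.Finite.mem_toFinset]
    exact Iff.rfl
  have hbmem : b ∈ T := by
    rw [hmemT]
    exact ⟨AlgEquiv.refl, by ext g; rfl⟩
  have hblockc : ∀ c ∈ T, IsBlockIdempotent c := by
    intro c hc
    obtain ⟨γ, rfl⟩ := (hmemT c).mp hc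
    exact hb.map (galActRingEquiv γ)
  have htilde : galOrbitSum K b = ∑ c ∈ T, c := rfl
  have htb : galOrbitSum K b * b = b := by
    rw [htilde, Finset.sum_mul]
    have hstep : ∀ c ∈ T, c * b = if c = b then b else 0 := by
      intro c hc
      split_ifs with h
      · rw [h]; exact hb.2.1
      · exact (hblockc c hc).mul_eq_zero_of_ne hb h
    rw [Finset.sum_congr rfl hstep, Finset.sum_ite_eq' T b (fun _ => b), if_pos hbmem]
  have htc : galOrbitSum K b ∈ Set.center (MonoidAlgebra L G) := by
    rw [Semigroup.mem_center_iff]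
    intro g
    rw [htilde, Finset.mul_sum, Finset.sum_mul]
    exact Finset.sum_congr rfl fun c hc => Semigroup.mem_center_iff.mp (hblockc c hc).1 g
  have key : ∀ Q : Subgroup G, IsPGroup p ↥Q → (Br Q b ≠ 0 ↔ Br Q b' ≠ 0) := by
    intro Q hQ
    have hBrGal : ∀ (γ : L ≃ₐ[K] L) (x : MonoidAlgebra L G),
        Br Q (galAct γ x) = galAct γ (Br Q x) := fun γ x => Br_mapRange γ (map_zero γ) Q x
    have h1 : Br Q (galOrbitSum K b) = 0 ↔ Br Q b = 0 := by
      constructor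
      · intro h0
        have hm := Br_mul p Q hQ htc hb.1
        rw [htb] at hm
        rw [hm, h0, zero_mul]
      · intro h0
        rw [htilde, Br_sum]
        apply Finset.sum_eq_zero
        intro c hc
        obtain ⟨γ, rfl⟩ := (hmemT c).mp hc
        rw [hBrGal, h0]
        ext g
        show γ ((0 : MonoidAlgebra L G).coeff g) = (0 : MonoidAlgebra L G).coeff g
        simp
    have h2 : Br Q (galOrbitSum K b) = 0 ↔ Br Q b' = 0 := by
      rw [← MonoidAlgebra.ofCoeff_coeff (galOrbitSum K b), ← hb', Br_mapRange,
        MonoidAlgebra.ofCoeff_eq_zero, ← MonoidAlgebra.coeff_eq_zero (x := Br Q b')]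
      constructor
      · intro h0
        apply Finsupp.mapRange_injective _ _ (algebraMap K L).injective
        rw [h0, Finsupp.mapRange_zero]
      · intro h0
        rw [h0, Finsupp.mapRange_zero]
    exact not_congr (h1.symm.trans h2)
  constructor
  · rintro ⟨hP, hBr, hmax⟩
    exact ⟨hP, (key P hP).mp hBr, fun Q hQ hPQ hBrQ => hmax Q hQ hPQ ((key Q hQ).mpr hBrQ)⟩
  · rintro ⟨hP, hBr, hmax⟩
    exact ⟨hP, (key P hP).mpr hBr, fun Q hQ hPQ hBrQ => hmax Q hQ hPQ ((key Q hQ).mp hBrQ)⟩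
end

section
/- Let F ⊆ F̃ be fusion systems over a finite p-group P and let σ ∈ Aut_{F̃}(P) be such that any two F̃-isomorphic subgroups Q, Q' of P satisfy: there exist Q'' ≤ P and i ∈ ℤ with Q F-isomorphic to Q'' and Q' = σ^i(Q''). Then a subgroup Q of P is fully F-centralized if and only if it is fully F̃-centralized, and fully F-normalized if and only if fully F̃-normalized. -/
/-- The condition that conjugation by `x` maps the subgroup `Q` into the subgroup `R`. -/
def ConjMapsTo {P : Type*} [Group P] (x : P) (Q R : Subgroup P) : Prop :=
  ∀ q ∈ Q, x * q * x⁻¹ ∈ R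

/-- The homomorphism `Q → R` induced by conjugation by `x`. -/
def conjHom {P : Type*} [Group P] (x : P) (Q R : Subgroup P) (h : ConjMapsTo x Q R) :
    ↥Q →* ↥R where
  toFun q := ⟨x * q * x⁻¹, h q q.2⟩
  map_one' := by ext; simp
  map_mul' a b := by ext; simp [mul_assoc]
  
/-- The image `φ(Q) ≤ P` of a homomorphism `φ : Q → R` between subgroups of `P`. -/
def imgSubgroup {P : Type*} [Group P] {Q R : Subgroup P} (φ : ↥Q →* ↥R) : Subgroup P :=
  (R.subtype.comp φ).range

/-- The corestriction `Q → φ(Q)`, `u ↦ φ(u)`, of `φ : Q → R`. -/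
def corestrict {P : Type*} [Group P] {Q R : Subgroup P} (φ : ↥Q →* ↥R) :
    ↥Q →* ↥(imgSubgroup φ) :=
  (R.subtype.comp φ).rangeRestrict

/-- A fusion system over a finite `p`-group `P` (Definition I.2.1 of Aschbacher–Kessar–Oliver):
a category whose objects are the subgroups of `P` and whose morphisms are injective group
homomorphisms, including all conjugation maps induced by elements of `P`, closed under
composition, and such that each morphism factors as an isomorphism onto its image whose
inverse is again a morphism. -/
structure FusionSystem (P : Type*) [Group P] where
  Hom : ∀ _Q _R : Subgroup P, Set (↥_Q →* ↥_R)
  inj_mem : ∀ {Q R : Subgroup P}, ∀ φ ∈ Hom Q R, Function.Injective φ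
  conj_mem : ∀ (x : P) (Q R : Subgroup P) (h : ConjMapsTo x Q R), conjHom x Q R h ∈ Hom Q R
  comp_mem : ∀ {Q R S : Subgroup P}, ∀ φ ∈ Hom Q R, ∀ ψ ∈ Hom R S, ψ.comp φ ∈ Hom Q S
  restrict_mem : ∀ {Q R : Subgroup P}, ∀ φ ∈ Hom Q R, corestrict φ ∈ Hom Q (imgSubgroup φ)
  inv_mem : ∀ {Q R : Subgroup P}, ∀ φ ∈ Hom Q R,
    ∃ ψ ∈ Hom (imgSubgroup φ) Q, ∀ q : ↥Q, ψ (corestrict φ q) = q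

namespace FusionSystem

variable {P : Type*} [Group P]

/-- Containment of fusion systems over `P`. -/
def LE (F F' : FusionSystem P) : Prop := ∀ Q R : Subgroup P, F.Hom Q R ⊆ F'.Hom Q R

/-- `Q` and `R` are `F`-isomorphic: some morphism in `Hom_F(Q,R)` is an isomorphism. -/
def IsIso (F : FusionSystem P) (Q R : Subgroup P) : Prop :=
  ∃ φ ∈ F.Hom Q R, Function.Surjective φ

/-- `Q` is fully `F`-centralized: `|C_P(Q)| ≥ |C_P(Q')|` for all `Q'` `F`-isomorphic to `Q`. -/
def FullyCentralized (F : FusionSystem P) (Q : Subgroup P) : Prop :=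
  ∀ Q' : Subgroup P, F.IsIso Q Q' →
    Nat.card ↥(Subgroup.centralizer (Q' : Set P)) ≤ Nat.card ↥(Subgroup.centralizer (Q : Set P))

/-- `Q` is fully `F`-normalized: `|N_P(Q)| ≥ |N_P(Q')|` for all `Q'` `F`-isomorphic to `Q`. -/
def FullyNormalized (F : FusionSystem P) (Q : Subgroup P) : Prop :=
  ∀ Q' : Subgroup P, F.IsIso Q Q' → Nat.card ↥(Subgroup.normalizer (Q' : Set P)) ≤ Nat.card ↥(Subgroup.normalizer (Q : Set P))

/-- `Q` is `F`-centric: `C_P(R) = Z(R)` for all `R` `F`-isomorphic to `Q`. -/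
def Centric (F : FusionSystem P) (Q : Subgroup P) : Prop :=
  ∀ R : Subgroup P, F.IsIso Q R →
    Subgroup.centralizer (R : Set P) = R ⊓ Subgroup.centralizer (R : Set P)

end FusionSystem

/-- An automorphism `σ` of `P`, as a morphism `P → P` (i.e. `⊤ → ⊤`). -/
def topHom {P : Type*} [Group P] (σ : MulAut P) : ↥(⊤ : Subgroup P) →* ↥(⊤ : Subgroup P) :=
  (σ.toMonoidHom.comp (⊤ : Subgroup P).subtype).codRestrict ⊤ (fun _ => trivial)


section
variable {G : Type*} [Group G]

lemma map_centralizer_eq (S : Set G) (f : G ≃* G) :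
    (Subgroup.centralizer S).map f.toMonoidHom = Subgroup.centralizer (f '' S) := by
  ext x
  simp only [Subgroup.mem_map, Subgroup.mem_centralizer_iff]
  constructor
  · rintro ⟨y, hy, rfl⟩ m ⟨s, hs, rfl⟩
    show f s * f y = f y * f s
    rw [← map_mul, ← map_mul, hy s hs]
  · intro h
    refine ⟨f.symm x, fun m hm => f.injective ?_, f.apply_symm_apply x⟩
    have := h (f m) ⟨m, hm, rfl⟩
    rw [map_mul, map_mul, f.apply_symm_apply, this]

lemma card_map_eq (H : Subgroup G) (f : G ≃* G) :
    Nat.card (H.map f.toMonoidHom) = Nat.card H :=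
  Nat.card_congr (Subgroup.equivMapOfInjective H _ f.injective).symm.toEquiv

end

/-- Let `F ⊆ F̃` be fusion systems over a finite `p`-group `P` and
`σ ∈ Aut_F̃(P)` be such that any two `F̃`-isomorphic subgroups `Q, Q'` satisfy: there are
`Q'' ≤ P` and `i ∈ ℤ` with `Q` `F`-isomorphic to `Q''` and `Q' = σ^i(Q'')`. Then `Q` is fully
`F`-centralized iff it is fully `F̃`-centralized, and fully `F`-normalized iff fully
`F̃`-normalized. -/
theorem fully_centralized_normalized_F_iff_Ftilde
    (p : ℕ) [Fact p.Prime] (P : Type*) [Group P] [Finite P] (hP : IsPGroup p P)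
    (F Ftilde : FusionSystem P) (hle : FusionSystem.LE F Ftilde)
    (σ : MulAut P) (hσ : topHom σ ∈ Ftilde.Hom ⊤ ⊤)
    (hiso : ∀ Q Q' : Subgroup P, Ftilde.IsIso Q Q' →
      ∃ (Q'' : Subgroup P) (i : ℤ), F.IsIso Q Q'' ∧ Q' = Q''.map (σ ^ i).toMonoidHom) :
    ∀ Q : Subgroup P,
      (F.FullyCentralized Q ↔ Ftilde.FullyCentralized Q) ∧
      (F.FullyNormalized Q ↔ Ftilde.FullyNormalized Q) := by
  have hFsub : ∀ Q R : Subgroup P, F.IsIso Q R → Ftilde.IsIso Q R := by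
    rintro Q R ⟨φ, hφ, hs⟩
    exact ⟨φ, hle Q R hφ, hs⟩
  intro Q
  constructor
  · constructor
    · intro h Q' hQ'
      obtain ⟨Q'', i, hFiso, rfl⟩ := hiso Q Q' hQ'
      calc Nat.card ↥(Subgroup.centralizer ((Q''.map (σ ^ i).toMonoidHom : Subgroup P) : Set P))
          = Nat.card ↥((Subgroup.centralizer (Q'' : Set P)).map (σ ^ i).toMonoidHom) := by
            rw [map_centralizer_eq]; rfl
        _ = Nat.card ↥(Subgroup.centralizer (Q'' : Set P)) := card_map_eq _ _
        _ ≤ _ := h Q'' hFiso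
    · intro h Q' hQ'
      exact h Q' (hFsub Q Q' hQ')
  · constructor
    · intro h Q' hQ'
      obtain ⟨Q'', i, hFiso, rfl⟩ := hiso Q Q' hQ'
      calc Nat.card ↥(Subgroup.normalizer ((Q''.map (σ ^ i).toMonoidHom : Subgroup P) : Set P))
          = Nat.card ↥((Subgroup.normalizer (Q'' : Set P)).map (σ ^ i).toMonoidHom) := by
            rw [Subgroup.map_equiv_normalizer_eq]
        _ = Nat.card ↥(Subgroup.normalizer (Q'' : Set P)) := card_map_eq _ _
        _ ≤ _ := h Q'' hFiso
    · intro h Q' hQ'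
      exact h Q' (hFsub Q Q' hQ')
end

section
/- Let F ⊆ F̃ be fusion systems over a finite p-group P and let σ ∈ Aut_{F̃}(P) be such that any two F̃-isomorphic subgroups Q, Q' of P satisfy: there exist Q'' ≤ P and i ∈ ℤ with Q F-isomorphic to Q'' and Q' = σ^i(Q''). Then a subgroup Q of P is F-centric if and only if it is F̃-centric. -/

lemma centralizer_map_equiv {P : Type*} [Group P] (e : P ≃* P) (S : Subgroup P) :
    Subgroup.centralizer ((S.map e.toMonoidHom : Subgroup P) : Set P)
      = (Subgroup.centralizer (S : Set P)).map e.toMonoidHom := by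
  ext x
  simp only [Subgroup.mem_centralizer_iff, Subgroup.mem_map, MulEquiv.coe_toMonoidHom,
    SetLike.mem_coe]
  constructor
  · intro h
    refine ⟨e.symm x, fun g hg => e.injective ?_, by simp⟩
    have := h (e g) ⟨g, hg, rfl⟩
    simpa [map_mul] using this
  · rintro ⟨y, hy, rfl⟩ g ⟨g', hg', rfl⟩
    have := hy g' hg'
    simp only [← map_mul, this]

/-- Let `F ⊆ F̃` be fusion systems over a finite `p`-group `P` and
`σ ∈ Aut_F̃(P)` be such that any two `F̃`-isomorphic subgroups `Q, Q'` satisfy: there are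
`Q'' ≤ P` and `i ∈ ℤ` with `Q` `F`-isomorphic to `Q''` and `Q' = σ^i(Q'')`. Then a subgroup `Q`
of `P` is `F`-centric iff it is `F̃`-centric. -/
theorem centric_F_iff_Ftilde
    (p : ℕ) [Fact p.Prime] (P : Type*) [Group P] [Finite P] (hP : IsPGroup p P)
    (F Ftilde : FusionSystem P) (hle : FusionSystem.LE F Ftilde)
    (σ : MulAut P) (hσ : topHom σ ∈ Ftilde.Hom ⊤ ⊤)
    (hiso : ∀ Q Q' : Subgroup P, Ftilde.IsIso Q Q' →
      ∃ (Q'' : Subgroup P) (i : ℤ), F.IsIso Q Q'' ∧ Q' = Q''.map (σ ^ i).toMonoidHom) :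
    ∀ Q : Subgroup P, F.Centric Q ↔ Ftilde.Centric Q := by
  intro Q
  constructor
  · intro hQ R hQR
    obtain ⟨Q'', i, hFiso, rfl⟩ := hiso Q R hQR
    have hc := hQ Q'' hFiso
    have hinj : Function.Injective ((σ ^ i).toMonoidHom : P →* P) := (σ ^ i).injective
    rw [centralizer_map_equiv (σ ^ i) Q'', hc, Subgroup.map_inf _ _ _ hinj,
      ← inf_assoc, inf_idem]
  · intro hQ R ⟨φ, hφ, hsurj⟩
    exact hQ R ⟨φ, hle _ _ hφ, hsurj⟩
end

section
/- Let F ⊆ F̃ be fusion systems over a finite p-group P with F̃ = ⟨F, σ⟩ for some σ ∈ Aut_{F̃}(P), such that every φ ∈ Hom_{F̃}(Q,P) factors as σ^i ∘ ψ with ψ ∈ Hom_F(Q,P), and such that fully normalized subgroups for F and F̃ coincide. If F satisfies the extension axiom, then F̃ satisfies the extension axiom. -/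
/-- The subset `N_φ ⊆ N_P(Q)` attached to a morphism `φ` with domain `Q`: all `y ∈ N_P(Q)` for
which there is `z ∈ N_P(φ(Q))` with `φ ∘ c_y = c_z ∘ φ` on `Q`. -/
def NphiSet {P : Type*} [Group P] {Q R : Subgroup P} (φ : ↥Q →* ↥R) : Set P :=
  {y | ∃ hy : ∀ q ∈ Q, y * q * y⁻¹ ∈ Q, y ∈ Subgroup.normalizer (Q : Set P) ∧
    ∃ z ∈ Subgroup.normalizer (imgSubgroup φ : Set P), ∀ (q : P) (hq : q ∈ Q),
      (φ ⟨y * q * y⁻¹, hy q hq⟩ : P) = z * (φ ⟨q, hq⟩ : P) * z⁻¹}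

/-- The extension axiom for a fusion system `F` over `P`: for every `Q ≤ P` and
`φ ∈ Hom_F(Q,P)` with `φ(Q)` fully `F`-normalized, `φ` extends to a morphism in `F`
defined on `N_φ`. -/
def FusionSystem.ExtensionAxiom {P : Type*} [Group P] (F : FusionSystem P) : Prop :=
  ∀ (Q : Subgroup P) (φ : ↥Q →* ↥(⊤ : Subgroup P)), φ ∈ F.Hom Q ⊤ →
    F.FullyNormalized (imgSubgroup φ) →
    ∀ N : Subgroup P, (N : Set P) = NphiSet φ →
      ∃ ψ ∈ F.Hom N ⊤, ∀ (q : P) (hq : q ∈ Q) (hq' : q ∈ N),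
        (ψ ⟨q, hq'⟩ : P) = (φ ⟨q, hq⟩ : P)

section Helpers

variable {P : Type*} [Group P]

lemma topHom_coe (σ : MulAut P) (q : ↥(⊤ : Subgroup P)) : (topHom σ q : P) = σ (q : P) := rfl

lemma mem_imgSubgroup {Q R : Subgroup P} (φ : ↥Q →* ↥R) (x : P) :
    x ∈ imgSubgroup φ ↔ ∃ q : ↥Q, (φ q : P) = x := by
  simp [imgSubgroup, MonoidHom.mem_range]

lemma corestrict_coe {Q R : Subgroup P} (φ : ↥Q →* ↥R) (q : ↥Q) :
    (corestrict φ q : P) = (φ q : P) := rfl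

lemma topHom_pow_mem (F : FusionSystem P) (σ : MulAut P) (h : topHom σ ∈ F.Hom ⊤ ⊤) :
    ∀ n : ℕ, topHom (σ ^ n) ∈ F.Hom ⊤ ⊤ := by
  intro n
  induction n with
  | zero =>
    have h1 : ConjMapsTo (1 : P) ⊤ ⊤ := fun q _ => trivial
    have : topHom ((σ : MulAut P) ^ 0) = conjHom 1 ⊤ ⊤ h1 := by
      ext q
      show ((1 : MulAut P) (q : P)) = 1 * (q : P) * (1 : P)⁻¹
      simp
    rw [this]
    exact F.conj_mem _ _ _ _
  | succ n ih =>
    have : topHom (σ ^ (n + 1)) = (topHom σ).comp (topHom (σ ^ n)) := by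
      ext q
      show (σ ^ (n + 1)) (q : P) = σ ((σ ^ n) (q : P))
      rw [pow_succ']
      rfl
    rw [this]
    exact F.comp_mem _ ih _ h

lemma exists_nat_zpow [Finite P] (σ : MulAut P) (i : ℤ) : ∃ n : ℕ, σ ^ i = σ ^ n := by
  have hfin : IsOfFinOrder σ := isOfFinOrder_of_finite σ
  have hm : (0 : ℕ) < orderOf σ := hfin.orderOf_pos
  refine ⟨(i % (orderOf σ : ℤ)).toNat, ?_⟩
  have hnonneg : (0 : ℤ) ≤ i % (orderOf σ : ℤ) :=
    Int.emod_nonneg i (by exact_mod_cast hm.ne')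
  rw [← zpow_natCast, Int.toNat_of_nonneg hnonneg, zpow_mod_orderOf]

lemma hom_congr (F' : FusionSystem P) {Q S T : Subgroup P} (h : S = T) (χ : ↥Q →* ↥S)
    (hχ : χ ∈ F'.Hom Q S) : ∃ χ' ∈ F'.Hom Q T, ∀ q, (χ' q : P) = (χ q : P) := by
  subst h
  exact ⟨χ, hχ, fun _ => rfl⟩

/-- Restriction of a global morphism `topHom τ` to a subgroup `S`, as a member of
`F'.Hom S (imgSubgroup ψ)` landing in any subgroup equal to its image, surjectively. -/
lemma restrict_topHom_iso (F' : FusionSystem P) (τ : MulAut P) (hτ : topHom τ ∈ F'.Hom ⊤ ⊤)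
    (S T : Subgroup P) (hT : ∀ x : P, x ∈ T ↔ ∃ s ∈ S, τ s = x) :
    ∃ ρ ∈ F'.Hom S T, (∀ s : ↥S, (ρ s : P) = τ (s : P)) ∧ Function.Surjective ρ := by
  have h1 : ConjMapsTo (1 : P) S ⊤ := fun q _ => trivial
  have hincl : conjHom 1 S ⊤ h1 ∈ F'.Hom S ⊤ := F'.conj_mem _ _ _ _
  set res : ↥S →* ↥(⊤ : Subgroup P) := (topHom τ).comp (conjHom 1 S ⊤ h1) with hres
  have hresmem : res ∈ F'.Hom S ⊤ := F'.comp_mem _ hincl _ hτ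
  have hresval : ∀ s : ↥S, (res s : P) = τ (s : P) := by
    intro s
    show τ (1 * (s : P) * (1 : P)⁻¹) = τ (s : P)
    simp
  have himg : imgSubgroup res = T := by
    ext x
    rw [mem_imgSubgroup, hT]
    constructor
    · rintro ⟨q, rfl⟩
      exact ⟨q, q.2, (hresval q).symm⟩
    · rintro ⟨s, hs, rfl⟩
      exact ⟨⟨s, hs⟩, hresval ⟨s, hs⟩⟩
  obtain ⟨ρ, hρmem, hρval⟩ := hom_congr F' himg (corestrict res) (F'.restrict_mem _ hresmem)
  refine ⟨ρ, hρmem, fun s => ?_, fun t => ?_⟩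
  · rw [hρval, corestrict_coe, hresval]
  · obtain ⟨s, hs, hst⟩ := (hT (t : P)).mp t.2
    exact ⟨⟨s, hs⟩, Subtype.ext (by rw [hρval, corestrict_coe, hresval]; exact hst)⟩

end Helpers

/-- Let `F ⊆ F̃` be fusion systems over a finite `p`-group `P` with
`F̃ = ⟨F, σ⟩` for some `σ ∈ Aut_F̃(P)`, such that every `φ ∈ Hom_F̃(Q,P)` factors as `σ^i ∘ ψ`
with `ψ ∈ Hom_F(Q,P)`, and such that fully normalized subgroups for `F` and `F̃` coincide.
If `F` satisfies the extension axiom, then so does `F̃`. -/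
theorem extension_axiom_of_generated
    (p : ℕ) [Fact p.Prime] (P : Type*) [Group P] [Finite P] (hP : IsPGroup p P)
    (F Ftilde : FusionSystem P) (hle : FusionSystem.LE F Ftilde)
    (σ : MulAut P) (hσ : topHom σ ∈ Ftilde.Hom ⊤ ⊤)
    (hgen : ∀ F' : FusionSystem P, FusionSystem.LE F F' → topHom σ ∈ F'.Hom ⊤ ⊤ →
      FusionSystem.LE Ftilde F')
    (hfact : ∀ (Q : Subgroup P), ∀ φ ∈ Ftilde.Hom Q ⊤,
      ∃ (i : ℤ) (ψ : ↥Q →* ↥(⊤ : Subgroup P)), ψ ∈ F.Hom Q ⊤ ∧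
        ∀ q : ↥Q, (φ q : P) = (σ ^ i) (ψ q : P))
    (hnorm : ∀ Q : Subgroup P, F.FullyNormalized Q ↔ Ftilde.FullyNormalized Q)
    (hext : F.ExtensionAxiom) :
    Ftilde.ExtensionAxiom := by
  intro Q φ hφ hFN N hNset
  obtain ⟨i, ψ, hψF, hval⟩ := hfact Q φ hφ
  -- The image of φ is the image of ψ transported by σ^i.
  have himg : imgSubgroup φ = Subgroup.map (σ ^ i).toMonoidHom (imgSubgroup ψ) := by
    ext x
    rw [mem_imgSubgroup, Subgroup.mem_map]
    constructor
    · rintro ⟨q, rfl⟩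
      exact ⟨(ψ q : P), (mem_imgSubgroup ψ _).mpr ⟨q, rfl⟩, (hval q).symm⟩
    · rintro ⟨y, hy, rfl⟩
      obtain ⟨q, rfl⟩ := (mem_imgSubgroup ψ _).mp hy
      exact ⟨q, hval q⟩
  have hnormeq : Subgroup.normalizer (imgSubgroup φ : Set P)
      = Subgroup.map (σ ^ i).toMonoidHom (Subgroup.normalizer (imgSubgroup ψ : Set P)) := by
    rw [himg, Subgroup.map_equiv_normalizer_eq]
  have hcard : Nat.card ↥(Subgroup.normalizer (imgSubgroup φ : Set P))
      = Nat.card ↥(Subgroup.normalizer (imgSubgroup ψ : Set P)) := by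
    rw [hnormeq]
    exact Nat.card_congr
      (Subgroup.equivMapOfInjective _ (σ ^ i).toMonoidHom (σ ^ i).injective).toEquiv.symm
  -- An F̃-isomorphism from imgSubgroup φ onto imgSubgroup ψ, given by σ^{-i}.
  obtain ⟨k, hk⟩ := exists_nat_zpow σ (-i)
  have hks : (σ ^ k : MulAut P) = (σ ^ i).symm := by
    rw [← hk, zpow_neg]; rfl
  have hTspec : ∀ x : P, x ∈ imgSubgroup ψ ↔ ∃ s ∈ imgSubgroup φ, (σ ^ k : MulAut P) s = x := by
    intro x
    constructor
    · intro hx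
      refine ⟨(σ ^ i) x, himg ▸ Subgroup.mem_map_of_mem _ hx, ?_⟩
      rw [hks, (σ ^ i).symm_apply_apply]
    · rintro ⟨s, hs, rfl⟩
      rw [himg] at hs
      rw [hks]
      exact Subgroup.mem_map_equiv.mp hs
  obtain ⟨ρ, hρmem, hρval, hρsurj⟩ :=
    restrict_topHom_iso Ftilde (σ ^ k) (topHom_pow_mem Ftilde σ hσ k)
      (imgSubgroup φ) (imgSubgroup ψ) hTspec
  -- imgSubgroup ψ is fully F-normalized.
  have hFNψ : F.FullyNormalized (imgSubgroup ψ) := by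
    rw [hnorm]
    rintro Q' ⟨χ, hχ, hχsurj⟩
    have hiso : Ftilde.IsIso (imgSubgroup φ) Q' :=
      ⟨χ.comp ρ, Ftilde.comp_mem _ hρmem _ hχ, hχsurj.comp hρsurj⟩
    calc Nat.card ↥(Subgroup.normalizer (Q' : Set P)) ≤ Nat.card ↥(Subgroup.normalizer (imgSubgroup φ : Set P)) := hFN Q' hiso
      _ = Nat.card ↥(Subgroup.normalizer (imgSubgroup ψ : Set P)) := hcard
  -- N_φ = N_ψ.
  have hmemz : ∀ z : P, z ∈ Subgroup.normalizer (imgSubgroup φ : Set P) ↔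
      (σ ^ i).symm z ∈ Subgroup.normalizer (imgSubgroup ψ : Set P) := by
    intro z
    rw [hnormeq, Subgroup.mem_map_equiv]
  have hNphi : NphiSet φ = NphiSet ψ := by
    ext y
    constructor
    · rintro ⟨hy, hyN, z, hz, hcon⟩
      refine ⟨hy, hyN, (σ ^ i).symm z, (hmemz z).mp hz, fun q hq => ?_⟩
      apply (σ ^ i).injective
      rw [map_mul, map_mul, map_inv, (σ ^ i).apply_symm_apply, ← hval ⟨y * q * y⁻¹, hy q hq⟩,
        ← hval ⟨q, hq⟩]
      exact hcon q hq
    · rintro ⟨hy, hyN, z, hz, hcon⟩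
      refine ⟨hy, hyN, (σ ^ i) z, (hmemz ((σ ^ i) z)).mpr (by rwa [(σ ^ i).symm_apply_apply]),
        fun q hq => ?_⟩
      rw [hval ⟨y * q * y⁻¹, hy q hq⟩, hval ⟨q, hq⟩, hcon q hq, map_mul, map_mul, map_inv]
  -- Extend ψ using the extension axiom for F, then compose with σ^i.
  obtain ⟨ψ', hψ'F, hψ'ext⟩ := hext Q ψ hψF hFNψ N (by rw [hNset, hNphi])
  obtain ⟨n, hn⟩ := exists_nat_zpow σ i
  refine ⟨(topHom (σ ^ n)).comp ψ',
    Ftilde.comp_mem _ (hle _ _ hψ'F) _ (topHom_pow_mem Ftilde σ hσ n), fun q hq hq' => ?_⟩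
  show (σ ^ n : MulAut P) ((ψ' ⟨q, hq'⟩ : P)) = (φ ⟨q, hq⟩ : P)
  rw [hψ'ext q hq hq', hval ⟨q, hq⟩, ← hn]
end
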